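/- arXiv:1005.5133 — 2 statements merged into one kernel-verified Lean document; each statement's English description precedes it below -/
import Mathlib

section
/- The derivative of φ(t) := (1/2)(√(1+t⁴) + 2 log t − log(1 + √(1+t⁴))) satisfies φ'(t) = √(1+t⁴)/t for all t > 0. -/
/-- Radial profile of the Eguchi–Hanson Kähler potential. -/
noncomputable def ehProfile (t : ℝ) : ℝ :=
  (1 / 2) * (Real.sqrt (1 + t ^ 4) + 2 * Real.log t - Real.log (1 + Real.sqrt (1 + t ^ 4)))

/-- `φ'(t) = √(1+t⁴)/t` for `t > 0`. -/
theorem ehProfile_hasDerivAt (t : ℝ) (ht : 0 < t) :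
    HasDerivAt ehProfile (Real.sqrt (1 + t ^ 4) / t) t := by
  have h4 : (0:ℝ) < 1 + t ^ 4 := by positivity
  set s := Real.sqrt (1 + t ^ 4) with hs
  have hs0 : 0 < s := Real.sqrt_pos.mpr h4
  have hs2 : s ^ 2 = 1 + t ^ 4 := Real.sq_sqrt h4.le
  have h1 : HasDerivAt (fun x : ℝ => 1 + x ^ 4) (4 * t ^ 3) t := by
    simpa using (hasDerivAt_pow 4 t).const_add 1
  have hsq : HasDerivAt (fun x : ℝ => Real.sqrt (1 + x ^ 4))
      (1 / (2 * s) * (4 * t ^ 3)) t :=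
    (Real.hasDerivAt_sqrt h4.ne').comp t h1
  have hlogt : HasDerivAt (fun x : ℝ => 2 * Real.log x) (2 * t⁻¹) t :=
    (Real.hasDerivAt_log ht.ne').const_mul 2
  have h1s : (0:ℝ) < 1 + s := by positivity
  have hlogs : HasDerivAt (fun x : ℝ => Real.log (1 + Real.sqrt (1 + x ^ 4)))
      ((1 + s)⁻¹ * (1 / (2 * s) * (4 * t ^ 3))) t :=
    (Real.hasDerivAt_log h1s.ne').comp (h₂ := Real.log) t (hsq.const_add 1)
  have hall : HasDerivAt ehProfile
      ((1/2) * ((1 / (2 * s) * (4 * t ^ 3)) + 2 * t⁻¹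
        - (1 + s)⁻¹ * (1 / (2 * s) * (4 * t ^ 3)))) t := by
    unfold ehProfile
    exact ((hsq.add hlogt).sub hlogs).const_mul (1/2)
  convert hall using 1
  have htne : t ≠ 0 := ht.ne'
  field_simp
  linear_combination (4 * s) * hs2
end

section
/- Let u be a harmonic function on ℝ × T³ (the flat product of the real line and a flat 3-torus) such that u(t,x) = λ·|t| + O(|t|^{-a}) as |t| → ∞, for some constant λ ∈ ℝ and some a > 0. Then λ = 0 and u ≡ 0. -/
open scoped BigOperators

/-- The flat Laplacian of a function on `ℝ⁴`, computed in the standard coordinates. -/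
noncomputable def laplacian (u : EuclideanSpace ℝ (Fin 4) → ℝ)
    (x : EuclideanSpace ℝ (Fin 4)) : ℝ :=
  ∑ i : Fin 4,
    (fderiv ℝ (fun y => fderiv ℝ u y (EuclideanSpace.single i 1)) x)
      (EuclideanSpace.single i 1)

noncomputable section
namespace T3aux

abbrev E4 : Type := EuclideanSpace ℝ (Fin 4)

def sgl (i : Fin 4) : E4 := EuclideanSpace.single i (1:ℝ)

def emb (t a b c : ℝ) : E4 := t • sgl 0 + a • sgl 1 + b • sgl 2 + c • sgl 3

lemma emb_apply0 (t a b c : ℝ) : (emb t a b c) 0 = t := by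
  simp [emb, sgl, EuclideanSpace.single_apply]

lemma eq_emb (x : E4) : x = emb (x 0) (x 1) (x 2) (x 3) := by
  ext i
  fin_cases i <;> simp [emb, sgl, EuclideanSpace.single_apply]

lemma continuous_emb : Continuous (fun p : ℝ × ℝ × ℝ × ℝ => emb p.1 p.2.1 p.2.2.1 p.2.2.2) := by
  unfold emb; fun_prop

lemma hasDerivAt_line {g : E4 → ℝ} (hg : Differentiable ℝ g) (x v : E4) (s : ℝ) :
    HasDerivAt (fun s : ℝ => g (x + s • v)) (fderiv ℝ g (x + s • v) v) s := by
  have h1 : HasDerivAt (fun s : ℝ => x + s • v) v s := by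
    simpa using ((hasDerivAt_id s).smul_const v).const_add x
  exact (hg (x + s • v)).hasFDerivAt.comp_hasDerivAt s h1

def D (i : Fin 4) (g : E4 → ℝ) (x : E4) : ℝ := fderiv ℝ g x (sgl i)

lemma laplacian_eq (g : E4 → ℝ) (x : E4) :
    laplacian g x = ∑ i : Fin 4, D i (D i g) x := rfl

lemma contDiff_D {g : E4 → ℝ} {n : ℕ} (hg : ContDiff ℝ (n + 1) g) (i : Fin 4) :
    ContDiff ℝ n (D i g) := by
  exact (hg.fderiv_right (by norm_cast)).clm_apply contDiff_const


open MeasureTheory intervalIntegral Set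

lemma hasDerivAt_param_integral {w w' : ℝ → ℝ → ℝ}
    (hw : Continuous fun p : ℝ × ℝ => w p.1 p.2)
    (hw' : Continuous fun p : ℝ × ℝ => w' p.1 p.2)
    (hd : ∀ s c, HasDerivAt (fun s => w s c) (w' s c) s) (s₀ : ℝ) :
    HasDerivAt (fun s => ∫ c in (0:ℝ)..1, w s c) (∫ c in (0:ℝ)..1, w' s₀ c) s₀ := by
  obtain ⟨M, hM⟩ := (IsCompact.exists_bound_of_continuousOn
    ((isCompact_Icc (a := s₀ - 1) (b := s₀ + 1)).prod (isCompact_Icc (a := (0:ℝ)) (b := 1)))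
    hw'.continuousOn)
  have main := intervalIntegral.hasDerivAt_integral_of_dominated_loc_of_deriv_le
    (F := fun s c => w s c) (F' := fun s c => w' s c) (x₀ := s₀) (a := (0:ℝ)) (b := 1)
    (bound := fun _ => M) (μ := volume) (s := Metric.ball s₀ 1) (Metric.ball_mem_nhds s₀ one_pos)
    (Filter.Eventually.of_forall fun s => (hw.comp (continuous_const.prodMk continuous_id)).aestronglyMeasurable)
    ((hw.comp (continuous_const.prodMk continuous_id)).intervalIntegrable 0 1)
    (hw'.comp (continuous_const.prodMk continuous_id)).aestronglyMeasurable
    ?_ (intervalIntegrable_const (μ := volume)) ?_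
  · exact main.2
  · refine Filter.Eventually.of_forall fun c hc s hs => ?_
    refine hM (s, c) ⟨?_, ?_⟩
    · have := Metric.mem_ball.mp hs
      rw [Real.dist_eq] at this
      constructor <;> [linarith [abs_le.mp this.le] ; linarith [(abs_le.mp this.le).2]]
    · exact Icc_subset_Icc le_rfl le_rfl (uIcc_of_le (by norm_num : (0:ℝ) ≤ 1) ▸ uIoc_subset_uIcc hc)
  · exact Filter.Eventually.of_forall fun c _ s _ => hd s c

def I3 (g : E4 → ℝ) (t a b : ℝ) : ℝ := ∫ c in (0:ℝ)..1, g (emb t a b c)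
def I2 (g : E4 → ℝ) (t a : ℝ) : ℝ := ∫ b in (0:ℝ)..1, I3 g t a b
def I1 (g : E4 → ℝ) (t : ℝ) : ℝ := ∫ a in (0:ℝ)..1, I2 g t a

lemma cont_comp_emb {g : E4 → ℝ} (hg : Continuous g) :
    Continuous (fun p : ℝ × ℝ × ℝ × ℝ => g (emb p.1 p.2.1 p.2.2.1 p.2.2.2)) :=
  hg.comp continuous_emb

lemma contI3 {g : E4 → ℝ} (hg : Continuous g) :
    Continuous (fun p : ℝ × ℝ × ℝ => I3 g p.1 p.2.1 p.2.2) := by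
  have hc : Continuous (fun q : (ℝ × ℝ × ℝ) × ℝ => (q.1.1, q.1.2.1, q.1.2.2, q.2)) := by fun_prop
  have h : Continuous (Function.uncurry fun (p : ℝ × ℝ × ℝ) c => g (emb p.1 p.2.1 p.2.2 c)) := by
    rw [Function.uncurry_def]
    have := (cont_comp_emb hg).comp hc; exact this
  exact intervalIntegral.continuous_parametric_intervalIntegral_of_continuous' (μ := volume) h 0 1

lemma contI2 {g : E4 → ℝ} (hg : Continuous g) :
    Continuous (fun p : ℝ × ℝ => I2 g p.1 p.2) := by
  have hc : Continuous (fun q : (ℝ × ℝ) × ℝ => (q.1.1, q.1.2, q.2)) := by fun_prop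
  have h : Continuous (Function.uncurry fun (p : ℝ × ℝ) b => I3 g p.1 p.2 b) := by
    rw [Function.uncurry_def]
    have := (contI3 hg).comp hc; exact this
  exact intervalIntegral.continuous_parametric_intervalIntegral_of_continuous' (μ := volume) h 0 1

lemma contI1 {g : E4 → ℝ} (hg : Continuous g) : Continuous (I1 g) := by
  have h : Continuous (Function.uncurry fun (t : ℝ) a => I2 g t a) := by
    rw [Function.uncurry_def]
    exact contI2 hg
  exact intervalIntegral.continuous_parametric_intervalIntegral_of_continuous' (μ := volume) h 0 1


lemma emb_s0 (s a b c : ℝ) : emb s a b c = emb 0 a b c + s • sgl 0 := by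
  unfold emb; module
lemma emb_s1 (t s b c : ℝ) : emb t s b c = emb t 0 b c + s • sgl 1 := by
  unfold emb; module
lemma emb_s2 (t a s c : ℝ) : emb t a s c = emb t a 0 c + s • sgl 2 := by
  unfold emb; module
lemma emb_s3 (t a b s : ℝ) : emb t a b s = emb t a b 0 + s • sgl 3 := by
  unfold emb; module

lemma hasDerivAt_emb0 {g : E4 → ℝ} (hg : Differentiable ℝ g) (a b c s : ℝ) :
    HasDerivAt (fun s => g (emb s a b c)) (D 0 g (emb s a b c)) s := by
  have h := hasDerivAt_line hg (emb 0 a b c) (sgl 0) s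
  simp only [← emb_s0] at h; exact h
lemma hasDerivAt_emb1 {g : E4 → ℝ} (hg : Differentiable ℝ g) (t b c s : ℝ) :
    HasDerivAt (fun s => g (emb t s b c)) (D 1 g (emb t s b c)) s := by
  have h := hasDerivAt_line hg (emb t 0 b c) (sgl 1) s
  simp only [← emb_s1] at h; exact h
lemma hasDerivAt_emb2 {g : E4 → ℝ} (hg : Differentiable ℝ g) (t a c s : ℝ) :
    HasDerivAt (fun s => g (emb t a s c)) (D 2 g (emb t a s c)) s := by
  have h := hasDerivAt_line hg (emb t a 0 c) (sgl 2) s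
  simp only [← emb_s2] at h; exact h
lemma hasDerivAt_emb3 {g : E4 → ℝ} (hg : Differentiable ℝ g) (t a b s : ℝ) :
    HasDerivAt (fun s => g (emb t a b s)) (D 3 g (emb t a b s)) s := by
  have h := hasDerivAt_line hg (emb t a b 0) (sgl 3) s
  simp only [← emb_s3] at h; exact h

lemma contE_tc {g : E4 → ℝ} (hg : Continuous g) (a b : ℝ) :
    Continuous fun p : ℝ × ℝ => g (emb p.1 a b p.2) := by
  have hm : Continuous fun p : ℝ × ℝ => ((p.1, a, b, p.2) : ℝ × ℝ × ℝ × ℝ) := by fun_prop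
  have := (cont_comp_emb hg).comp hm; exact this
lemma contE_ac {g : E4 → ℝ} (hg : Continuous g) (t b : ℝ) :
    Continuous fun p : ℝ × ℝ => g (emb t p.1 b p.2) := by
  have hm : Continuous fun p : ℝ × ℝ => ((t, p.1, b, p.2) : ℝ × ℝ × ℝ × ℝ) := by fun_prop
  have := (cont_comp_emb hg).comp hm; exact this
lemma contE_bc {g : E4 → ℝ} (hg : Continuous g) (t a : ℝ) :
    Continuous fun p : ℝ × ℝ => g (emb t a p.1 p.2) := by
  have hm : Continuous fun p : ℝ × ℝ => ((t, a, p.1, p.2) : ℝ × ℝ × ℝ × ℝ) := by fun_prop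
  have := (cont_comp_emb hg).comp hm; exact this
lemma contI3_tb {g : E4 → ℝ} (hg : Continuous g) (a : ℝ) :
    Continuous fun p : ℝ × ℝ => I3 g p.1 a p.2 := by
  have hm : Continuous fun p : ℝ × ℝ => ((p.1, a, p.2) : ℝ × ℝ × ℝ) := by fun_prop
  have := (contI3 hg).comp hm; exact this
lemma contI3_ab {g : E4 → ℝ} (hg : Continuous g) (t : ℝ) :
    Continuous fun p : ℝ × ℝ => I3 g t p.1 p.2 := by
  have hm : Continuous fun p : ℝ × ℝ => ((t, p.1, p.2) : ℝ × ℝ × ℝ) := by fun_prop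
  have := (contI3 hg).comp hm; exact this

lemma L3t {g : E4 → ℝ} (hg : ContDiff ℝ 1 g) (t a b : ℝ) :
    HasDerivAt (fun s => I3 g s a b) (I3 (D 0 g) t a b) t :=
  hasDerivAt_param_integral (contE_tc hg.continuous a b)
    (contE_tc (contDiff_D (n := 0) hg 0).continuous a b)
    (fun s c => hasDerivAt_emb0 (hg.differentiable one_ne_zero) a b c s) t

lemma L3a {g : E4 → ℝ} (hg : ContDiff ℝ 1 g) (t a b : ℝ) :
    HasDerivAt (fun s => I3 g t s b) (I3 (D 1 g) t a b) a :=
  hasDerivAt_param_integral (contE_ac hg.continuous t b)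
    (contE_ac (contDiff_D (n := 0) hg 1).continuous t b)
    (fun s c => hasDerivAt_emb1 (hg.differentiable one_ne_zero) t b c s) a

lemma L3b {g : E4 → ℝ} (hg : ContDiff ℝ 1 g) (t a b : ℝ) :
    HasDerivAt (fun s => I3 g t a s) (I3 (D 2 g) t a b) b :=
  hasDerivAt_param_integral (contE_bc hg.continuous t a)
    (contE_bc (contDiff_D (n := 0) hg 2).continuous t a)
    (fun s c => hasDerivAt_emb2 (hg.differentiable one_ne_zero) t a c s) b

lemma L2t {g : E4 → ℝ} (hg : ContDiff ℝ 1 g) (t a : ℝ) :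
    HasDerivAt (fun s => I2 g s a) (I2 (D 0 g) t a) t :=
  hasDerivAt_param_integral (contI3_tb hg.continuous a)
    (contI3_tb (contDiff_D (n := 0) hg 0).continuous a)
    (fun s b => L3t hg s a b) t

lemma L2a {g : E4 → ℝ} (hg : ContDiff ℝ 1 g) (t a : ℝ) :
    HasDerivAt (fun s => I2 g t s) (I2 (D 1 g) t a) a :=
  hasDerivAt_param_integral (contI3_ab hg.continuous t)
    (contI3_ab (contDiff_D (n := 0) hg 1).continuous t)
    (fun s b => L3a hg t s b) a

lemma L1t {g : E4 → ℝ} (hg : ContDiff ℝ 1 g) (t : ℝ) :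
    HasDerivAt (fun s => I1 g s) (I1 (D 0 g) t) t :=
  hasDerivAt_param_integral (contI2 hg.continuous)
    (contI2 (contDiff_D (n := 0) hg 0).continuous)
    (fun s a => L2t hg s a) t


lemma fderiv_periodic {g : E4 → ℝ} (hg : Differentiable ℝ g) {v : E4}
    (hp : ∀ x, g (x + v) = g x) (x : E4) : fderiv ℝ g (x + v) = fderiv ℝ g x := by
  have h1 : HasFDerivAt (fun y => g (y + v))
      ((fderiv ℝ g (x + v)).comp (ContinuousLinearMap.id ℝ E4)) x :=
    (hg (x + v)).hasFDerivAt.comp x ((hasFDerivAt_id x).add_const v)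
  have h2 : (fun y => g (y + v)) = g := funext hp
  rw [h2] at h1
  have h3 := h1.fderiv
  rw [ContinuousLinearMap.comp_id] at h3
  exact h3.symm

lemma D_periodic {g : E4 → ℝ} (hg : Differentiable ℝ g) {v : E4}
    (hp : ∀ x, g (x + v) = g x) (i : Fin 4) (x : E4) :
    D i g (x + v) = D i g x := by
  unfold D; rw [fderiv_periodic hg hp]

lemma contS3 {g : E4 → ℝ} (hg : Continuous g) (t a b : ℝ) :
    Continuous fun c => g (emb t a b c) := by
  have := contE_bc hg t a
  have := this.comp (continuous_const.prodMk continuous_id : Continuous fun c : ℝ => (b, c)); exact this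

lemma Z3 {w : E4 → ℝ} (hw : ContDiff ℝ 1 w) (hp : ∀ x, w (x + sgl 3) = w x) (t a b : ℝ) :
    I3 (D 3 w) t a b = 0 := by
  have hftc := intervalIntegral.integral_eq_sub_of_hasDerivAt
    (f := fun c => w (emb t a b c)) (f' := fun c => D 3 w (emb t a b c))
    (fun c _ => hasDerivAt_emb3 (hw.differentiable one_ne_zero) t a b c)
    ((contS3 (contDiff_D (n := 0) hw 3).continuous t a b).intervalIntegrable 0 1)
  have he : emb t a b 1 = emb t a b 0 + sgl 3 := by
    rw [emb_s3 t a b 1, one_smul]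
  rw [I3, hftc]
  show w (emb t a b 1) - w (emb t a b 0) = 0
  rw [he, hp, sub_self]

lemma Z2 {w : E4 → ℝ} (hw : ContDiff ℝ 1 w) (hp : ∀ x, w (x + sgl 2) = w x) (t a : ℝ) :
    I2 (D 2 w) t a = 0 := by
  have hftc := intervalIntegral.integral_eq_sub_of_hasDerivAt
    (f := fun b => I3 w t a b) (f' := fun b => I3 (D 2 w) t a b)
    (fun b _ => L3b hw t a b)
    (((contI3_ab (contDiff_D (n := 0) hw 2).continuous t).comp
      (continuous_const.prodMk continuous_id : Continuous fun b : ℝ => (a, b))).intervalIntegrable 0 1)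
  have he : ∀ c, emb t a 1 c = emb t a 0 c + sgl 2 := by
    intro c; rw [emb_s2 t a 1 c, emb_s2 t a 0 c, one_smul, zero_smul, add_zero]
  have hcong : I3 w t a 1 = I3 w t a 0 := by
    unfold I3; congr 1; funext c; rw [he c, hp]
  rw [I2, hftc]
  show I3 w t a 1 - I3 w t a 0 = 0
  rw [hcong, sub_self]

lemma Z1 {w : E4 → ℝ} (hw : ContDiff ℝ 1 w) (hp : ∀ x, w (x + sgl 1) = w x) (t : ℝ) :
    I1 (D 1 w) t = 0 := by
  have hftc := intervalIntegral.integral_eq_sub_of_hasDerivAt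
    (f := fun a => I2 w t a) (f' := fun a => I2 (D 1 w) t a)
    (fun a _ => L2a hw t a)
    (((contI2 (contDiff_D (n := 0) hw 1).continuous).comp
      (continuous_const.prodMk continuous_id : Continuous fun a : ℝ => (t, a))).intervalIntegrable 0 1)
  have he : ∀ b c, emb t 1 b c = emb t 0 b c + sgl 1 := by
    intro b c; rw [emb_s1 t 1 b c, emb_s1 t 0 b c, one_smul, zero_smul, add_zero]
  have hcong : I2 w t 1 = I2 w t 0 := by
    unfold I2; congr 1; funext b
    unfold I3; congr 1; funext c; rw [he b c, hp]
  rw [I1, hftc]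
  show I2 w t 1 - I2 w t 0 = 0
  rw [hcong, sub_self]


lemma I3_sub {g h : E4 → ℝ} (hg : Continuous g) (hh : Continuous h) (t a b : ℝ) :
    I3 (fun x => g x - h x) t a b = I3 g t a b - I3 h t a b := by
  unfold I3
  exact intervalIntegral.integral_sub ((contS3 hg t a b).intervalIntegrable 0 1)
    ((contS3 hh t a b).intervalIntegrable 0 1)

set_option maxHeartbeats 1000000 in
lemma contS2 {g : E4 → ℝ} (hg : Continuous g) (t a : ℝ) :
    Continuous fun b => I3 g t a b := by
  have := (contI3_ab hg t).comp
    (continuous_const.prodMk continuous_id : Continuous fun b : ℝ => (a, b)); exact this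

set_option maxHeartbeats 1000000 in
lemma contS1 {g : E4 → ℝ} (hg : Continuous g) (t : ℝ) :
    Continuous fun a => I2 g t a := by
  have := (contI2 hg).comp
    (continuous_const.prodMk continuous_id : Continuous fun a : ℝ => (t, a)); exact this

lemma I2_sub {g h : E4 → ℝ} (hg : Continuous g) (hh : Continuous h) (t a : ℝ) :
    I2 (fun x => g x - h x) t a = I2 g t a - I2 h t a := by
  unfold I2
  rw [show (fun b => I3 (fun x => g x - h x) t a b) = fun b => I3 g t a b - I3 h t a b from
    funext fun b => I3_sub hg hh t a b]
  exact intervalIntegral.integral_sub ((contS2 hg t a).intervalIntegrable 0 1)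
    ((contS2 hh t a).intervalIntegrable 0 1)

lemma I1_sub {g h : E4 → ℝ} (hg : Continuous g) (hh : Continuous h) (t : ℝ) :
    I1 (fun x => g x - h x) t = I1 g t - I1 h t := by
  unfold I1
  rw [show (fun a => I2 (fun x => g x - h x) t a) = fun a => I2 g t a - I2 h t a from
    funext fun a => I2_sub hg hh t a]
  exact intervalIntegral.integral_sub ((contS1 hg t).intervalIntegrable 0 1)
    ((contS1 hh t).intervalIntegrable 0 1)

lemma I3_nonneg {g : E4 → ℝ} (h : ∀ x, 0 ≤ g x) (t a b : ℝ) : 0 ≤ I3 g t a b :=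
  intervalIntegral.integral_nonneg (by norm_num) (fun c _ => h _)

lemma I2_nonneg {g : E4 → ℝ} (h : ∀ x, 0 ≤ g x) (t a : ℝ) : 0 ≤ I2 g t a :=
  intervalIntegral.integral_nonneg (by norm_num) (fun b _ => I3_nonneg h t a b)

lemma I1_nonneg {g : E4 → ℝ} (h : ∀ x, 0 ≤ g x) (t : ℝ) : 0 ≤ I1 g t :=
  intervalIntegral.integral_nonneg (by norm_num) (fun a _ => I2_nonneg h t a)

lemma I3_abs_le {g : E4 → ℝ} {t : ℝ} {M : ℝ} (h : ∀ a b c : ℝ, |g (emb t a b c)| ≤ M)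
    (a b : ℝ) : |I3 g t a b| ≤ M := by
  have := intervalIntegral.norm_integral_le_of_norm_le_const (C := M) (a := (0:ℝ)) (b := 1)
    (f := fun c => g (emb t a b c)) (fun c _ => h a b c)
  simpa [I3] using this

lemma I2_abs_le {g : E4 → ℝ} {t : ℝ} {M : ℝ} (h : ∀ a b c : ℝ, |g (emb t a b c)| ≤ M)
    (a : ℝ) : |I2 g t a| ≤ M := by
  have := intervalIntegral.norm_integral_le_of_norm_le_const (C := M) (a := (0:ℝ)) (b := 1)
    (f := fun b => I3 g t a b) (fun b _ => I3_abs_le h a b)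
  simpa [I2] using this

lemma I1_abs_le {g : E4 → ℝ} {t : ℝ} {M : ℝ} (h : ∀ a b c : ℝ, |g (emb t a b c)| ≤ M) :
    |I1 g t| ≤ M := by
  have := intervalIntegral.norm_integral_le_of_norm_le_const (C := M) (a := (0:ℝ)) (b := 1)
    (f := fun a => I2 g t a) (fun a _ => I2_abs_le h a)
  simpa [I1] using this

lemma D00_decomp {g : E4 → ℝ} (x : E4) :
    D 0 (D 0 g) x = laplacian g x - D 1 (D 1 g) x - D 2 (D 2 g) x - D 3 (D 3 g) x := by
  rw [laplacian_eq, Fin.sum_univ_four]; ring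

section prod_rule
variable {u : E4 → ℝ}

lemma Du_diff (hu : ContDiff ℝ 2 u) (i : Fin 4) : Differentiable ℝ (D i u) :=
  (contDiff_D (n := 1) hu i).differentiable one_ne_zero

lemma Dq_eq (hu : ContDiff ℝ 2 u) (i : Fin 4) (x : E4) :
    D i (fun y => u y * u y) x = 2 * (u x * D i u x) := by
  unfold D
  rw [fderiv_fun_mul (hu.differentiable two_ne_zero).differentiableAt
    (hu.differentiable two_ne_zero).differentiableAt]
  simp [D]; ring

lemma DDq_eq (hu : ContDiff ℝ 2 u) (i : Fin 4) (x : E4) :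
    D i (D i (fun y => u y * u y)) x
      = 2 * (D i u x * D i u x) + 2 * (u x * D i (D i u) x) := by
  have hq' : (fun y => D i (fun z => u z * u z) y) = fun y => 2 * (u y * D i u y) :=
    funext (fun y => Dq_eq hu i y)
  show fderiv ℝ (fun y => D i (fun z => u z * u z) y) x (sgl i) = _
  rw [hq']
  have hdm : DifferentiableAt ℝ (fun y => u y * D i u y) x :=
    ((hu.differentiable two_ne_zero).differentiableAt).mul ((Du_diff hu i) x)
  rw [fderiv_const_mul hdm]
  rw [fderiv_fun_mul ((hu.differentiable two_ne_zero).differentiableAt) ((Du_diff hu i) x)]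
  simp [D]; ring

lemma lap_q_eq (hu : ContDiff ℝ 2 u) (x : E4) :
    laplacian (fun y => u y * u y) x
      = 2 * (∑ i : Fin 4, D i u x * D i u x) + 2 * (u x * laplacian u x) := by
  rw [laplacian_eq, laplacian_eq]
  rw [Fin.sum_univ_four, Fin.sum_univ_four, DDq_eq hu, DDq_eq hu, DDq_eq hu, DDq_eq hu,
    Fin.sum_univ_four]
  ring

lemma lap_q_nonneg (hu : ContDiff ℝ 2 u) (hharm : ∀ x, laplacian u x = 0) (x : E4) :
    0 ≤ laplacian (fun y => u y * u y) x := by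
  rw [lap_q_eq hu, hharm, mul_zero, mul_zero, add_zero]
  have h0 : (0:ℝ) ≤ ∑ i : Fin 4, D i u x * D i u x :=
    Finset.sum_nonneg fun i _ => mul_self_nonneg _
  linarith

end prod_rule


lemma slope_zero {m b K : ℝ} (h : ∀ t : ℝ, 1 ≤ t → |m * t + b| ≤ K) : m = 0 := by
  by_contra hm
  have hmpos : 0 < |m| := abs_pos.mpr hm
  set T : ℝ := max 1 ((K + |b| + 1) / |m|) with hT
  have hT1 : (1:ℝ) ≤ T := le_max_left _ _
  have hT2 : (K + |b| + 1) / |m| ≤ T := le_max_right _ _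
  have h1 := h T hT1
  have h2 : |m * T| ≤ |m * T + b| + |b| := by
    have := abs_add_le (m * T + b) (-b); simpa using this
  have habs : |m * T| = |m| * T := by
    rw [abs_mul, abs_of_pos (lt_of_lt_of_le one_pos hT1)]
  have h3 : |m| * T ≤ K + |b| := by
    rw [habs] at h2; linarith
  have h4 : K + |b| + 1 ≤ |m| * T := by
    rw [div_le_iff₀ hmpos] at hT2; linarith
  linarith

lemma rpow_neg_anti {a : ℝ} (ha : 0 < a) {x y : ℝ} (hy : 1 ≤ y) (hxy : y ≤ x) :
    x ^ (-a) ≤ y ^ (-a) := by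
  have hy0 : 0 < y := lt_of_lt_of_le one_pos hy
  have hx0 : 0 < x := lt_of_lt_of_le hy0 hxy
  rw [Real.rpow_neg hx0.le, Real.rpow_neg hy0.le]
  have h1 : y ^ a ≤ x ^ a := Real.rpow_le_rpow hy0.le hxy ha.le
  have h2 : 0 < y ^ a := Real.rpow_pos_of_pos hy0 a
  exact inv_anti₀ h2 h1

lemma eq_zero_of_integral_eq_zero {h : ℝ → ℝ} (hc : Continuous h) (hnn : ∀ s, 0 ≤ h s)
    (hz : ∫ s in (0:ℝ)..1, h s = 0) : ∀ s ∈ Set.Icc (0:ℝ) 1, h s = 0 := by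
  intro s₀ hs₀
  by_contra hne
  have hpos : 0 < h s₀ := (hnn s₀).lt_of_ne (Ne.symm hne)
  have hlt := intervalIntegral.integral_pos (f := h) (by norm_num : (0:ℝ) < 1)
    hc.continuousOn (fun x _ => hnn x) ⟨s₀, hs₀, hpos⟩
  rw [hz] at hlt
  exact lt_irrefl 0 hlt


lemma cont_lap {g : E4 → ℝ} (hg : ContDiff ℝ 2 g) : Continuous (laplacian g) := by
  rw [show laplacian g = fun x => ∑ i : Fin 4, D i (D i g) x from funext (laplacian_eq g)]
  exact continuous_finset_sum _
    (fun i _ => (contDiff_D (n := 0) (contDiff_D (n := 1) hg i) i).continuous)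

lemma cont_DD {g : E4 → ℝ} (hg : ContDiff ℝ 2 g) (i : Fin 4) :
    Continuous (D i (D i g)) :=
  (contDiff_D (n := 0) (contDiff_D (n := 1) hg i) i).continuous

lemma ZZ1 {w : E4 → ℝ} (hw : ContDiff ℝ 2 w) (hp : ∀ x, w (x + sgl 1) = w x) (t : ℝ) :
    I1 (D 1 (D 1 w)) t = 0 :=
  Z1 (contDiff_D (n := 1) hw 1) (D_periodic (hw.differentiable two_ne_zero) hp 1) t

lemma ZZ2 {w : E4 → ℝ} (hw : ContDiff ℝ 2 w) (hp : ∀ x, w (x + sgl 2) = w x) (t : ℝ) :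
    I1 (D 2 (D 2 w)) t = 0 := by
  have h : ∀ a, I2 (D 2 (D 2 w)) t a = 0 := fun a =>
    Z2 (contDiff_D (n := 1) hw 2) (D_periodic (hw.differentiable two_ne_zero) hp 2) t a
  unfold I1
  simp [h]

lemma ZZ3 {w : E4 → ℝ} (hw : ContDiff ℝ 2 w) (hp : ∀ x, w (x + sgl 3) = w x) (t : ℝ) :
    I1 (D 3 (D 3 w)) t = 0 := by
  have h : ∀ a b, I3 (D 3 (D 3 w)) t a b = 0 := fun a b =>
    Z3 (contDiff_D (n := 1) hw 3) (D_periodic (hw.differentiable two_ne_zero) hp 3) t a b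
  unfold I1 I2
  simp [h]

lemma I1_const (c t : ℝ) : I1 (fun _ => c) t = c := by
  simp [I1, I2, I3]

/-- `I1` of the second `t`-derivative equals `I1` of the Laplacian. -/
lemma I1_D00_eq_lap {w : E4 → ℝ} (hw : ContDiff ℝ 2 w)
    (hp : ∀ (x : E4) (i : Fin 4), i ≠ 0 → w (x + sgl i) = w x) (t : ℝ) :
    I1 (D 0 (D 0 w)) t = I1 (laplacian w) t := by
  have hfun : D 0 (D 0 w) = fun x =>
      ((fun y => laplacian w y - D 1 (D 1 w) y) x - D 2 (D 2 w) x) - D 3 (D 3 w) x :=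
    funext fun x => by rw [D00_decomp]
  rw [hfun]
  rw [I1_sub (((cont_lap hw).fun_sub (cont_DD hw 1)).fun_sub (cont_DD hw 2)) (cont_DD hw 3) t]
  rw [I1_sub ((cont_lap hw).fun_sub (cont_DD hw 1)) (cont_DD hw 2) t]
  rw [I1_sub (cont_lap hw) (cont_DD hw 1) t]
  rw [ZZ1 hw (fun x => hp x 1 (by decide)) t, ZZ2 hw (fun x => hp x 2 (by decide)) t,
    ZZ3 hw (fun x => hp x 3 (by decide)) t]
  ring

lemma per_int {u : E4 → ℝ}
    (hper : ∀ (x : E4) (i : Fin 4), i ≠ 0 → u (x + EuclideanSpace.single i 1) = u x)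
    (i : Fin 4) (hi : i ≠ 0) (n : ℤ) (x : E4) :
    u (x + (n : ℝ) • sgl i) = u x := by
  have hper' : ∀ y : E4, u (y + sgl i) = u y := fun y => hper y i hi
  induction n using Int.induction_on with
  | zero => simp
  | succ n ih =>
    have h1 : x + (((n : ℤ) + 1 : ℤ) : ℝ) • sgl i = (x + ((n : ℤ) : ℝ) • sgl i) + sgl i := by
      push_cast; rw [add_smul, one_smul, add_assoc]
    rw [h1, hper']
    exact ih
  | pred n ih =>
    have h1 : (x + ((-n - 1 : ℤ) : ℝ) • sgl i) + sgl i = x + ((-n : ℤ) : ℝ) • sgl i := by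
      push_cast; module
    have h2 := hper' (x + ((-n - 1 : ℤ) : ℝ) • sgl i)
    rw [h1] at h2
    rw [← h2]
    exact ih


lemma emb_shift1 (t A B Cc : ℝ) :
    emb t A B Cc = emb t (Int.fract A) B Cc + ((⌊A⌋ : ℤ) : ℝ) • sgl 1 := by
  rw [← Int.self_sub_floor]; unfold emb; module

lemma emb_shift2 (t A B Cc : ℝ) :
    emb t A B Cc = emb t A (Int.fract B) Cc + ((⌊B⌋ : ℤ) : ℝ) • sgl 2 := by
  rw [← Int.self_sub_floor]; unfold emb; module

lemma emb_shift3 (t A B Cc : ℝ) :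
    emb t A B Cc = emb t A B (Int.fract Cc) + ((⌊Cc⌋ : ℤ) : ℝ) • sgl 3 := by
  rw [← Int.self_sub_floor]; unfold emb; module

end T3aux


open T3aux Filter in
/-- a harmonic function on `ℝ × T³` (seen as a `ℤ³`-periodic harmonic
function on `ℝ⁴`, periodic in the last three coordinates) which is `λ·|t| + O(|t|^{-a})`
as `|t| → ∞` must have `λ = 0` and vanish identically. -/
theorem harmonic_on_R_times_T3_linear_growth_vanishes
    (u : EuclideanSpace ℝ (Fin 4) → ℝ) (hu : ContDiff ℝ 2 u)
    (hper : ∀ (x : EuclideanSpace ℝ (Fin 4)) (i : Fin 4), i ≠ 0 →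
      u (x + EuclideanSpace.single i 1) = u x)
    (hharm : ∀ x, laplacian u x = 0)
    (lam a C : ℝ) (ha : 0 < a)
    (hasymp : ∀ x : EuclideanSpace ℝ (Fin 4), 1 ≤ |x 0| →
      abs (u x - lam * |x 0|) ≤ C * |x 0| ^ (-a)) :
    lam = 0 ∧ ∀ x, u x = 0 := by
  set q : E4 → ℝ := fun x => u x * u x with hqdef
  have hq : ContDiff ℝ 2 q := hu.mul hu
  have hperu' : ∀ (x : E4) (i : Fin 4), i ≠ 0 → u (x + sgl i) = u x := hper
  have hperq' : ∀ (x : E4) (i : Fin 4), i ≠ 0 → q (x + sgl i) = q x := by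
    intro x i hi; simp only [hqdef]; rw [hperu' x i hi]
  have hC : 0 ≤ C := by
    have h1 := hasymp (emb 1 0 0 0) (by rw [emb_apply0]; norm_num)
    rw [emb_apply0] at h1
    simp only [abs_one, Real.one_rpow, mul_one] at h1
    exact le_trans (abs_nonneg _) h1
  -- the average G = I1 u is affine
  have hu1 : ContDiff ℝ 1 u := hu.of_le one_le_two
  have hG' : ∀ t, HasDerivAt (I1 u) (I1 (D 0 u) t) t := fun t => L1t hu1 t
  have hDu0 : ContDiff ℝ 1 (D 0 u) := contDiff_D (n := 1) hu 0
  have hG'' : ∀ t, HasDerivAt (I1 (D 0 u)) (I1 (D 0 (D 0 u)) t) t := fun t => L1t hDu0 t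
  have hGzero : ∀ t, I1 (D 0 (D 0 u)) t = 0 := by
    intro t
    rw [I1_D00_eq_lap hu hperu' t]
    rw [show laplacian u = fun _ => (0:ℝ) from funext hharm]
    exact I1_const 0 t
  have hGconst : ∀ t, I1 (D 0 u) t = I1 (D 0 u) 0 := fun t =>
    is_const_of_deriv_eq_zero (fun s => (hG'' s).differentiableAt)
      (fun s => (hG'' s).deriv.trans (hGzero s)) t 0
  have hGlin : ∀ t, I1 u t = I1 u 0 + I1 (D 0 u) 0 * t := by
    intro t
    have hφ : ∀ s, HasDerivAt (fun r => I1 u r - I1 (D 0 u) 0 * r) 0 s := by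
      intro s
      have h1 := (hG' s).fun_sub ((hasDerivAt_id s).const_mul (I1 (D 0 u) 0))
      rw [hGconst s] at h1
      simpa using h1
    have h2 := is_const_of_deriv_eq_zero (fun s => (hφ s).differentiableAt)
      (fun s => (hφ s).deriv) t 0
    rw [mul_zero, sub_zero] at h2
    linarith
  have hGasym : ∀ t : ℝ, 1 ≤ |t| → abs (I1 u t - lam * |t|) ≤ C := by
    intro t ht
    have hpt : ∀ a' b' c' : ℝ,
        abs ((fun x => u x - lam * |t|) (emb t a' b' c')) ≤ C * |t| ^ (-a) := by
      intro a' b' c'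
      have h1 := hasymp (emb t a' b' c') (by rw [emb_apply0]; exact ht)
      rw [emb_apply0] at h1
      exact h1
    have h2 : abs (I1 (fun x => u x - lam * |t|) t) ≤ C * |t| ^ (-a) := I1_abs_le hpt
    rw [I1_sub hu.continuous continuous_const t, I1_const] at h2
    have h3 : C * |t| ^ (-a) ≤ C * 1 :=
      mul_le_mul_of_nonneg_left
        (Real.rpow_le_one_of_one_le_of_nonpos ht (neg_nonpos.mpr ha.le)) hC
    rw [mul_one] at h3
    exact h2.trans h3
  have hαlam : I1 (D 0 u) 0 = lam := by
    have h := slope_zero (m := I1 (D 0 u) 0 - lam) (b := I1 u 0) (K := C) ?_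
    · linarith
    intro t ht
    have habs : |t| = t := abs_of_nonneg (le_trans zero_le_one ht)
    have h1 := hGasym t (by rw [habs]; exact ht)
    rw [hGlin t, habs] at h1
    have heq : (I1 (D 0 u) 0 - lam) * t + I1 u 0 = I1 u 0 + I1 (D 0 u) 0 * t - lam * t := by
      ring
    rw [heq]
    exact h1
  have hαneg : -(I1 (D 0 u) 0 + lam) = 0 := by
    apply slope_zero (m := -(I1 (D 0 u) 0 + lam)) (b := I1 u 0) (K := C)
    intro t ht
    have ht0 : (0:ℝ) ≤ t := le_trans zero_le_one ht
    have habs : |(-t : ℝ)| = t := by rw [abs_neg, abs_of_nonneg ht0]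
    have h1 := hGasym (-t) (by rw [habs]; exact ht)
    rw [hGlin (-t), habs] at h1
    have heq : -(I1 (D 0 u) 0 + lam) * t + I1 u 0
        = I1 u 0 + I1 (D 0 u) 0 * (-t) - lam * t := by ring
    rw [heq]
    exact h1
  have hlam : lam = 0 := by linarith
  -- bound on u
  have hub : ∀ x : E4, 1 ≤ |x 0| → |u x| ≤ C * |x 0| ^ (-a) := by
    intro x hx
    have h1 := hasymp x hx
    rw [hlam] at h1
    simpa using h1
  -- F = I1 q is convex, nonneg, decaying
  have hF' : ∀ t, HasDerivAt (I1 q) (I1 (D 0 q) t) t := fun t => L1t (hq.of_le one_le_two) t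
  have hDq0 : ContDiff ℝ 1 (D 0 q) := contDiff_D (n := 1) hq 0
  have hF'' : ∀ t, HasDerivAt (I1 (D 0 q)) (I1 (D 0 (D 0 q)) t) t := fun t => L1t hDq0 t
  have hderivF : deriv (I1 q) = fun s => I1 (D 0 q) s := funext fun s => (hF' s).deriv
  have hF2pos : ∀ t, 0 ≤ I1 (D 0 (D 0 q)) t := by
    intro t
    rw [I1_D00_eq_lap hq hperq' t]
    exact I1_nonneg (fun x => lap_q_nonneg hu hharm x) t
  have hFconv : ConvexOn ℝ Set.univ (I1 q) := by
    apply convexOn_of_deriv2_nonneg convex_univ (contI1 hq.continuous).continuousOn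
    · intro t _
      exact ((hF' t).differentiableAt).differentiableWithinAt
    · intro t _
      rw [hderivF]
      exact ((hF'' t).differentiableAt).differentiableWithinAt
    · intro t _
      have h1 : deriv^[2] (I1 q) t = deriv (deriv (I1 q)) t := rfl
      rw [h1, hderivF]
      have h2 : deriv (fun s => I1 (D 0 q) s) t = I1 (D 0 (D 0 q)) t := (hF'' t).deriv
      rw [h2]
      exact hF2pos t
  have hqnn : ∀ x : E4, 0 ≤ q x := fun x => mul_self_nonneg (u x)
  have hFnn : ∀ t, 0 ≤ I1 q t := fun t => I1_nonneg hqnn t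
  have hFbound : ∀ t : ℝ, 1 ≤ |t| → I1 q t ≤ C ^ 2 * (|t| ^ (-a)) ^ 2 := by
    intro t ht
    have hpt : ∀ a' b' c' : ℝ, |q (emb t a' b' c')| ≤ C ^ 2 * (|t| ^ (-a)) ^ 2 := by
      intro a' b' c'
      have h1 := hub (emb t a' b' c') (by rw [emb_apply0]; exact ht)
      rw [emb_apply0] at h1
      have h2 : abs (q (emb t a' b' c'))
          = |u (emb t a' b' c')| * |u (emb t a' b' c')| := by
        simp [hqdef, abs_mul]
      rw [h2]
      have h3 := mul_le_mul h1 h1 (abs_nonneg _) (le_trans (abs_nonneg _) h1)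
      calc |u (emb t a' b' c')| * |u (emb t a' b' c')|
          ≤ C * |t| ^ (-a) * (C * |t| ^ (-a)) := h3
        _ = C ^ 2 * (|t| ^ (-a)) ^ 2 := by ring
    exact le_trans (le_abs_self _) (I1_abs_le hpt)
  have hFzero : ∀ t, I1 q t = 0 := by
    intro t
    refine le_antisymm ?_ (hFnn t)
    have key : ∀ R : ℝ, |t| + 1 ≤ R → I1 q t ≤ C ^ 2 * ((R - |t|) ^ (-a)) ^ 2 := by
      intro R hR
      have hcvx := hFconv.2 (Set.mem_univ (t - R)) (Set.mem_univ (t + R))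
        (by norm_num : (0:ℝ) ≤ 1/2) (by norm_num : (0:ℝ) ≤ 1/2) (by norm_num : (1:ℝ)/2 + 1/2 = 1)
      have hmid : (1/2 : ℝ) • (t - R) + (1/2 : ℝ) • (t + R) = t := by
        simp only [smul_eq_mul]; ring
      rw [hmid] at hcvx
      simp only [smul_eq_mul] at hcvx
      have h1R : (1:ℝ) ≤ R - |t| := by linarith
      have hRnn : (0:ℝ) ≤ R := by linarith [abs_nonneg t]
      have hbnd : ∀ s : ℝ, R - |t| ≤ |s| → I1 q s ≤ C ^ 2 * ((R - |t|) ^ (-a)) ^ 2 := by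
        intro s hs
        have h1s : 1 ≤ |s| := le_trans h1R hs
        have h2 := hFbound s h1s
        have h3 : |s| ^ (-a) ≤ (R - |t|) ^ (-a) := rpow_neg_anti ha h1R hs
        have h4 : (|s| ^ (-a)) ^ 2 ≤ ((R - |t|) ^ (-a)) ^ 2 :=
          pow_le_pow_left₀ (Real.rpow_nonneg (abs_nonneg _) _) h3 2
        exact h2.trans (mul_le_mul_of_nonneg_left h4 (pow_nonneg hC 2))
      have hb1 : I1 q (t - R) ≤ C ^ 2 * ((R - |t|) ^ (-a)) ^ 2 := by
        apply hbnd
        have h := abs_sub_abs_le_abs_sub R t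
        rw [abs_of_nonneg hRnn] at h
        rw [abs_sub_comm]
        linarith
      have hb2 : I1 q (t + R) ≤ C ^ 2 * ((R - |t|) ^ (-a)) ^ 2 := by
        apply hbnd
        have h := abs_sub_abs_le_abs_sub R (-t)
        rw [abs_of_nonneg hRnn, abs_neg, sub_neg_eq_add] at h
        rw [add_comm]
        linarith
      linarith
    have hlim : Tendsto (fun R : ℝ => C ^ 2 * ((R - |t|) ^ (-a)) ^ 2) atTop (nhds 0) := by
      have h1 : Tendsto (fun R : ℝ => R - |t|) atTop atTop :=
        tendsto_atTop_add_const_right _ _ tendsto_id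
      have h2 := (tendsto_rpow_neg_atTop ha).comp h1
      have h3 := (h2.pow 2).const_mul (C ^ 2)
      simpa using h3
    exact ge_of_tendsto hlim (eventually_atTop.mpr ⟨|t| + 1, fun R hR => key R hR⟩)
  -- extraction
  have hext : ∀ (t a' b' c' : ℝ), a' ∈ Set.Icc (0:ℝ) 1 → b' ∈ Set.Icc (0:ℝ) 1 →
      c' ∈ Set.Icc (0:ℝ) 1 → u (emb t a' b' c') = 0 := by
    intro t a' b' c' ha' hb' hc'
    have h1 : ∀ s ∈ Set.Icc (0:ℝ) 1, I2 q t s = 0 := by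
      apply eq_zero_of_integral_eq_zero (contS1 hq.continuous t) (fun s => I2_nonneg hqnn t s)
      exact hFzero t
    have h2 : ∀ s ∈ Set.Icc (0:ℝ) 1, I3 q t a' s = 0 := by
      apply eq_zero_of_integral_eq_zero (contS2 hq.continuous t a') (fun s => I3_nonneg hqnn t a' s)
      exact h1 a' ha'
    have h3 : ∀ s ∈ Set.Icc (0:ℝ) 1, q (emb t a' b' s) = 0 := by
      apply eq_zero_of_integral_eq_zero (contS3 hq.continuous t a' b') (fun s => hqnn _)
      exact h2 b' hb'
    have h4 := h3 c' hc'
    simp only [hqdef] at h4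
    exact mul_self_eq_zero.mp h4
  refine ⟨hlam, ?_⟩
  intro x
  have hfr : ∀ y : ℝ, Int.fract y ∈ Set.Icc (0:ℝ) 1 :=
    fun y => ⟨Int.fract_nonneg y, (Int.fract_lt_one y).le⟩
  calc u x = u (emb (x 0) (x 1) (x 2) (x 3)) := by rw [← eq_emb x]
    _ = u (emb (x 0) (Int.fract (x 1)) (x 2) (x 3)) := by
        rw [emb_shift1]; exact per_int hper 1 (by decide) _ _
    _ = u (emb (x 0) (Int.fract (x 1)) (Int.fract (x 2)) (x 3)) := by
        rw [emb_shift2]; exact per_int hper 2 (by decide) _ _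
    _ = u (emb (x 0) (Int.fract (x 1)) (Int.fract (x 2)) (Int.fract (x 3))) := by
        rw [emb_shift3]; exact per_int hper 3 (by decide) _ _
    _ = 0 := hext _ _ _ _ (hfr _) (hfr _) (hfr _)
end
end
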